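/- Given coefficients p₀,…,p₆ ∈ ℂ and λ₀ ∈ ℝ with λ₀ ≠ i (i.e., i ∉ ℝ), there exist unique a₄,…,a₁₀ ∈ ℂ such that the rational function g₀(λ) = Σ_{j=4}^{10} aⱼ/(λ-i)^j satisfies g₀(λ) = Σ_{j=0}^{6} pⱼ(λ-λ₀)^j + O((λ-λ₀)⁷) as λ → λ₀, i.e., the Taylor expansion of g₀ at λ₀ matches the given polynomial to order 6. -/

import Mathlib

open Complex Finset

namespace Stmt14Aux

def N₀ : Matrix (Fin 7) (Fin 7) ℤ :=
  !![1, 1, 1, 1, 1, 1, 1;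
     -4, -5, -6, -7, -8, -9, -10;
     20, 30, 42, 56, 72, 90, 110;
     -120, -210, -336, -504, -720, -990, -1320;
     840, 1680, 3024, 5040, 7920, 11880, 17160;
     -6720, -15120, -30240, -55440, -95040, -154440, -240240;
     60480, 151200, 332640, 665280, 1235520, 2162160, 3603600]

def Lmat : Matrix (Fin 7) (Fin 7) ℤ :=
  !![1, 0, 0, 0, 0, 0, 0;
     0, -1, 0, 0, 0, 0, 0;
     0, 1, 1, 0, 0, 0, 0;
     0, -2, -3, -1, 0, 0, 0;
     0, 6, 11, 6, 1, 0, 0;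
     0, -24, -50, -35, -10, -1, 0;
     0, 120, 274, 225, 85, 15, 1]

def V : Matrix (Fin 7) (Fin 7) ℤ := Matrix.vandermonde (fun j => (j : ℤ) + 4)

theorem N₀_eq : N₀ = Lmat * V.transpose := by
  ext n j
  fin_cases n <;> fin_cases j <;>
    norm_num [N₀, Lmat, V, Matrix.mul_apply, Fin.sum_univ_succ, Matrix.vandermonde]

theorem detL : Lmat.det = -1 := by
  have h : ∀ i j : Fin 7, i < j → Lmat i j = 0 := by
    intro i j hij; fin_cases i <;> fin_cases j <;> simp_all [Lmat]
  rw [Matrix.det_of_lowerTriangular Lmat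
    (fun i j hij => h i j (OrderDual.toDual_lt_toDual.mp hij))]
  norm_num [Lmat, Fin.prod_univ_succ]

theorem detV : V.det = 24883200 := by
  rw [V, Matrix.det_vandermonde]
  norm_num [Fin.prod_univ_succ, Fin.prod_Ioi_zero, Fin.prod_Ioi_succ]

theorem detN₀ : N₀.det = -24883200 := by
  rw [N₀_eq, Matrix.det_mul, Matrix.det_transpose, detL, detV]; norm_num

/-- The coefficient matrix. -/
noncomputable def Mmat (c : ℂ) : Matrix (Fin 7) (Fin 7) ℂ := fun n j =>
  (∏ i ∈ Finset.range (n : ℕ), (((-(((j : ℕ) + 4 : ℕ) : ℤ) : ℤ) : ℂ) - i)) *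
    c ^ (-(((j : ℕ) + 4 : ℕ) : ℤ) - ((n : ℕ) : ℤ))

theorem prod_eq_N₀ (n j : Fin 7) :
    (∏ i ∈ Finset.range (n : ℕ), (((-(((j : ℕ) + 4 : ℕ) : ℤ) : ℤ) : ℂ) - i)) = ((N₀ n j : ℤ) : ℂ) := by
  fin_cases n <;> fin_cases j <;> norm_num [N₀, Finset.prod_range_succ]

theorem det_Mmat_ne_zero {c : ℂ} (hc : c ≠ 0) : (Mmat c).det ≠ 0 := by
  have hM : Mmat c =
      Matrix.diagonal (fun n : Fin 7 => c ^ (-((n : ℕ) : ℤ))) *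
        N₀.map ⇑(Int.castRingHom ℂ) *
        Matrix.diagonal (fun j : Fin 7 => c ^ (-(((j : ℕ) : ℤ) + 4))) := by
    ext n j
    rw [Matrix.mul_diagonal, Matrix.diagonal_mul, Matrix.map_apply, eq_intCast]
    rw [Mmat, prod_eq_N₀, show (-(((j : ℕ) + 4 : ℕ) : ℤ) - ((n : ℕ) : ℤ))
        = (-((n : ℕ) : ℤ)) + (-(((j : ℕ) : ℤ) + 4)) by push_cast; ring, zpow_add₀ hc]
    ring
  have hd : (N₀.map ⇑(Int.castRingHom ℂ)).det = ((N₀.det : ℤ) : ℂ) := by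
    rw [← RingHom.mapMatrix_apply, ← RingHom.map_det, eq_intCast]
  rw [hM, Matrix.det_mul, Matrix.det_mul, Matrix.det_diagonal, Matrix.det_diagonal, hd]
  have h1 : (∏ i : Fin 7, c ^ (-((i : ℕ) : ℤ))) ≠ 0 :=
    Finset.prod_ne_zero_iff.2 fun i _ => zpow_ne_zero _ hc
  have h2 : (∏ i : Fin 7, c ^ (-(((i : ℕ) : ℤ) + 4))) ≠ 0 :=
    Finset.prod_ne_zero_iff.2 fun i _ => zpow_ne_zero _ hc
  have h3 : ((N₀.det : ℤ) : ℂ) ≠ 0 := by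
    rw [detN₀]; norm_num
  exact mul_ne_zero (mul_ne_zero h1 h3) h2

theorem I_ne_ofReal (l₀ : ℝ) : (l₀ : ℂ) ≠ I := by
  intro h
  have := congrArg Complex.im h
  simp at this

/-- iterated derivative of a single inverse power. -/
theorem single (k n : ℕ) (x : ℂ) :
    iteratedDeriv n (fun l : ℂ => ((l - I) ^ k)⁻¹) x
      = (∏ i ∈ Finset.range n, ((-(k : ℤ) : ℂ) - i)) * (x - I) ^ (-(k : ℤ) - (n : ℤ)) := by
  have h1 : (fun l : ℂ => ((l - I) ^ k)⁻¹)
      = fun z : ℂ => (fun y : ℂ => y ^ (-(k : ℤ))) (z + -I) := by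
    funext z
    simp [zpow_neg, sub_eq_add_neg]
  have h2 : iteratedDeriv n (fun z : ℂ => (fun y : ℂ => y ^ (-(k : ℤ))) (z + -I)) x
      = iteratedDeriv n (fun y : ℂ => y ^ (-(k : ℤ))) (x + -I) :=
    congrFun (iteratedDeriv_comp_add_const (𝕜 := ℂ) (F := ℂ) n (fun y : ℂ => y ^ (-(k : ℤ))) (-I)) x
  calc iteratedDeriv n (fun l : ℂ => ((l - I) ^ k)⁻¹) x
      = iteratedDeriv n (fun y : ℂ => y ^ (-(k : ℤ))) (x + -I) := by rw [h1]; exact h2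
    _ = (∏ i ∈ Finset.range n, (((-(k : ℤ) : ℤ) : ℂ) - i)) * (x + -I) ^ (-(k : ℤ) - (n : ℤ)) := by
        rw [iteratedDeriv_eq_iterate, iter_deriv_zpow]
    _ = _ := by rw [← sub_eq_add_neg]; norm_num
theorem cdOn {n : ℕ} (k : ℕ) : ContDiffOn ℂ n (fun l : ℂ => ((l - I) ^ k)⁻¹) {(I : ℂ)}ᶜ :=
  ((contDiffOn_id.sub contDiffOn_const).pow k).inv
    fun x hx => pow_ne_zero _ (sub_ne_zero.mpr hx)

theorem itDW_eq (n : ℕ) {s : Set ℂ} (hs : IsOpen s) {x : ℂ} (hx : x ∈ s) (f : ℂ → ℂ) :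
    iteratedDerivWithin n f s x = iteratedDeriv n f x := by
  simp only [iteratedDerivWithin, iteratedDeriv, iteratedFDerivWithin_of_isOpen n hs hx]

theorem itDW_sum {n : ℕ} {s : Set ℂ} (hu : UniqueDiffOn ℂ s) {x : ℂ} (hx : x ∈ s)
    (t : Finset (Fin 7)) (f : Fin 7 → ℂ → ℂ) (h : ∀ j, ContDiffOn ℂ n (f j) s) :
    iteratedDerivWithin n (fun l => ∑ j ∈ t, f j l) s x
      = ∑ j ∈ t, iteratedDerivWithin n (f j) s x := by
  classical
  induction t using Finset.induction_on with
  | empty =>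
      simp only [Finset.sum_empty]
      simp [iteratedDerivWithin, iteratedFDerivWithin_zero_fun]
  | @insert a t ha ih =>
      have e : (fun l => ∑ j ∈ insert a t, f j l) = (f a + fun l => ∑ j ∈ t, f j l) := by
        funext l
        simp [Finset.sum_insert ha]
      rw [e, iteratedDerivWithin_add hx hu (h a x hx) ((ContDiffOn.sum fun j _ => h j) x hx), ih,
        Finset.sum_insert ha]

theorem key (l₀ : ℝ) (a : Fin 7 → ℂ) (n : Fin 7) :
    iteratedDeriv (n : ℕ) (fun l : ℂ => ∑ j : Fin 7, a j / (l - I) ^ ((j : ℕ) + 4)) (l₀ : ℂ)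
      = ((Mmat ((l₀ : ℂ) - I)).mulVec a) n := by
  have hs : IsOpen {(I : ℂ)}ᶜ := isOpen_compl_singleton
  have hu : UniqueDiffOn ℂ {(I : ℂ)}ᶜ := hs.uniqueDiffOn
  have hx : (l₀ : ℂ) ∈ ({(I : ℂ)}ᶜ : Set ℂ) := fun hmem => I_ne_ofReal l₀ hmem
  have e : (fun l : ℂ => ∑ j : Fin 7, a j / (l - I) ^ ((j : ℕ) + 4))
      = fun l : ℂ => ∑ j : Fin 7, a j * ((l - I) ^ ((j : ℕ) + 4))⁻¹ := by
    funext l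
    simp [div_eq_mul_inv]
  rw [e, ← itDW_eq (n : ℕ) hs hx,
    itDW_sum hu hx Finset.univ _ (fun j => contDiffOn_const.mul (cdOn _))]
  simp only [Matrix.mulVec, dotProduct]
  refine Finset.sum_congr rfl fun j _ => ?_
  rw [iteratedDerivWithin_const_mul hx hu (a j) (cdOn _ _ hx), itDW_eq _ hs hx, single, Mmat]
  push_cast
  ring

end Stmt14Aux

open Stmt14Aux in
/-- There exist unique coefficients a₄,…,a₁₀ such that g₀(λ) = Σ_{j=4}^{10} aⱼ/(λ-i)^j
matches the polynomial Σ_{j=0}^{6} pⱼ(λ-λ₀)^j to order 6 at λ₀, i.e. the first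
seven Taylor coefficients of g₀ at λ₀ equal the pⱼ. -/
theorem stmt_14 (l₀ : ℝ) (p : Fin 7 → ℂ) :
    ∃! a : Fin 7 → ℂ, ∀ n : Fin 7,
      iteratedDeriv (n : ℕ)
          (fun l : ℂ => ∑ j : Fin 7, a j / (l - Complex.I) ^ ((j : ℕ) + 4)) (l₀ : ℂ)
        = ((n : ℕ).factorial : ℂ) * p n := by
  have hc : ((l₀ : ℂ) - I) ≠ 0 := sub_ne_zero.mpr (I_ne_ofReal l₀)
  have hdet : IsUnit (Mmat ((l₀ : ℂ) - I)).det := (det_Mmat_ne_zero hc).isUnit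
  refine ⟨(Mmat ((l₀ : ℂ) - I))⁻¹.mulVec (fun m : Fin 7 => ((m : ℕ).factorial : ℂ) * p m), ?_, ?_⟩
  · intro n
    rw [key l₀ _ n, Matrix.mulVec_mulVec, Matrix.mul_nonsing_inv _ hdet, Matrix.one_mulVec]
  · intro a ha
    have h : (Mmat ((l₀ : ℂ) - I)).mulVec a = fun m : Fin 7 => ((m : ℕ).factorial : ℂ) * p m :=
      funext fun n => (key l₀ a n).symm.trans (ha n)
    calc a = (Mmat ((l₀ : ℂ) - I))⁻¹.mulVec ((Mmat ((l₀ : ℂ) - I)).mulVec a) := by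
            rw [Matrix.mulVec_mulVec, Matrix.nonsing_inv_mul _ hdet, Matrix.one_mulVec]
      _ = _ := by rw [h]
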